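/- For all real x with 0 ≤ x ≤ 1, one has 2⁴¹·(f((1+x)/512) + f((1−x)/512)) = 132809/40989847500 + (583/2679075)x² + (19/12150)x⁴ + (1/405)x⁶ + (1/1260)x⁸. -/

import Mathlib

open scoped BigOperators

open Set in
lemma fab_step (g g' P Q : ℝ → ℝ)
    (hg : ContinuousOn g (Set.Icc 0 1))
    (hgd : ∀ x ∈ Set.Ioo (0:ℝ) 1, HasDerivAt g (g' x) x)
    (hg'c : ContinuousOn g' (Set.Icc 0 1))
    (heq : ∀ x ∈ Set.Icc (0:ℝ) 1, g' x = P x)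
    (hQ : ∀ x : ℝ, HasDerivAt Q (P x) x)
    (hPc : Continuous P) :
    ∀ x ∈ Set.Icc (0:ℝ) 1, g x = g 0 + (Q x - Q 0) := by
  intro x hx
  obtain ⟨hx0, hx1⟩ := hx
  have hsub : Set.Icc (0:ℝ) x ⊆ Set.Icc 0 1 := Set.Icc_subset_Icc le_rfl hx1
  have h1 : ∫ t in (0:ℝ)..x, g' t = g x - g 0 := by
    apply intervalIntegral.integral_eq_sub_of_hasDeriv_right_of_le hx0
      (hg.mono hsub)
      (fun t ht => (hgd t ⟨ht.1, lt_of_lt_of_le ht.2 hx1⟩).hasDerivWithinAt)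
    apply ContinuousOn.intervalIntegrable
    rw [Set.uIcc_of_le hx0]
    exact hg'c.mono hsub
  have h2 : ∫ t in (0:ℝ)..x, g' t = ∫ t in (0:ℝ)..x, P t := by
    apply intervalIntegral.integral_congr
    intro t ht
    rw [Set.uIcc_of_le hx0] at ht
    exact heq t (hsub ht)
  have h3 : ∫ t in (0:ℝ)..x, P t = Q x - Q 0 :=
    intervalIntegral.integral_eq_sub_of_hasDerivAt (fun t _ => hQ t) (hPc.intervalIntegrable 0 x)
  linarith

set_option maxHeartbeats 4000000 in
theorem fabius_stmt_8 (f : ℝ → ℝ)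
    (hcont : ContinuousOn f (Set.Ici 0))
    (hsym : ∀ x : ℝ, 0 ≤ x → x ≤ 1 → f x + f (1 - x) = 1)
    (hint : ∀ x : ℝ, 0 ≤ x → f x = ∫ t in (0:ℝ)..(2 * x), f t) :
    ∀ x : ℝ, 0 ≤ x → x ≤ 1 →
      2 ^ 41 * (f ((1 + x) / 512) + f ((1 - x) / 512)) = 132809 / 40989847500 + (583 / 2679075) * x ^ 2 + (19 / 12150) * x ^ 4 + (1 / 405) * x ^ 6 + (1 / 1260) * x ^ 8 := by
  have hf0 : f 0 = 0 := by
    have h := hint 0 le_rfl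
    simpa using h
  have hfd : ∀ y : ℝ, 0 < y → HasDerivAt f (2 * f (2*y)) y := by
    intro y hy
    have hF : HasDerivAt (fun u => ∫ t in (0:ℝ)..u, f t) (f (2*y)) (2*y) := by
      apply intervalIntegral.integral_hasDerivAt_right
      · apply ContinuousOn.intervalIntegrable
        apply hcont.mono
        rw [Set.uIcc_of_le (by linarith : (0:ℝ) ≤ 2*y)]
        exact fun t ht => ht.1
      · exact (hcont.mono (fun t ht => le_of_lt ht)).stronglyMeasurableAtFilter isOpen_Ioi (2*y)
          (by simp; linarith)
      · exact hcont.continuousAt (Ici_mem_nhds (by linarith))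
    have h2 : HasDerivAt (fun u : ℝ => ∫ t in (0:ℝ)..(2*u), f t) (2 * f (2*y)) y := by
      have h3 := hF.comp y ((hasDerivAt_id y).const_mul 2)
      refine h3.congr_deriv ?_
      ring
    apply h2.congr_of_eventuallyEq
    exact Filter.eventuallyEq_of_mem (Ici_mem_nhds hy) (fun u hu => hint u hu)
  have hdp : ∀ c : ℝ, 0 < c → ∀ x : ℝ, -1 < x →
      HasDerivAt (fun x => f ((1+x)/c)) (2/c * f ((2+2*x)/c)) x := by
    intro c hc x hx
    have h1 : HasDerivAt (fun x : ℝ => (1+x)/c) (1/c) x := by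
      simpa using ((hasDerivAt_id x).const_add 1).div_const c
    have h2 := (hfd ((1+x)/c) (div_pos (by linarith) hc)).comp x h1
    refine h2.congr_deriv ?_
    rw [show (2+2*x)/c = 2*((1+x)/c) by ring]
    ring
  have hdm : ∀ c : ℝ, 0 < c → ∀ x : ℝ, x < 1 →
      HasDerivAt (fun x => f ((1-x)/c)) (-(2/c) * f ((2-2*x)/c)) x := by
    intro c hc x hx
    have h1 : HasDerivAt (fun x : ℝ => (1-x)/c) (-1/c) x := by
      simpa using ((hasDerivAt_id x).const_sub 1).div_const c
    have h2 := (hfd ((1-x)/c) (div_pos (by linarith) hc)).comp x h1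
    refine h2.congr_deriv ?_
    rw [show (2-2*x)/c = 2*((1-x)/c) by ring]
    ring
  have hg4 : ContinuousOn (fun x : ℝ => f ((1+x)/4) - f ((1-x)/4)) (Set.Icc 0 1) := ContinuousOn.sub
    (by
      apply hcont.comp (by fun_prop)
      intro t ht
      exact Set.mem_Ici.mpr (div_nonneg (by linarith [ht.1, ht.2]) (by norm_num)))
    (by
      apply hcont.comp (by fun_prop)
      intro t ht
      exact Set.mem_Ici.mpr (div_nonneg (by linarith [ht.1, ht.2]) (by norm_num)))
  have hgc4 : ContinuousOn (fun x : ℝ => 2/4 * (f ((2+2*x)/4) + f ((2-2*x)/4))) (Set.Icc 0 1) := continuousOn_const.mul (ContinuousOn.add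
    (by
      apply hcont.comp (by fun_prop)
      intro t ht
      exact Set.mem_Ici.mpr (div_nonneg (by linarith [ht.1, ht.2]) (by norm_num)))
    (by
      apply hcont.comp (by fun_prop)
      intro t ht
      exact Set.mem_Ici.mpr (div_nonneg (by linarith [ht.1, ht.2]) (by norm_num))))
  have hgd4 : ∀ x ∈ Set.Ioo (0:ℝ) 1, HasDerivAt (fun x : ℝ => f ((1+x)/4) - f ((1-x)/4)) (2/4 * (f ((2+2*x)/4) + f ((2-2*x)/4))) x := by
    intro x hx
    have h := (hdp 4 (by norm_num) x (by linarith [hx.1])).sub (hdm 4 (by norm_num) x hx.2)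
    refine h.congr_deriv ?_
    ring
  have heq4 : ∀ x ∈ Set.Icc (0:ℝ) 1, 2/4 * (f ((2+2*x)/4) + f ((2-2*x)/4)) = (1/2) := by
    intro x hx
    have h := hsym ((1+x)/2) (by linarith [hx.1]) (by linarith [hx.2])
    rw [show (1:ℝ) - (1+x)/2 = (1-x)/2 by ring] at h
    rw [show (2+2*x)/4 = (1+x)/2 by ring, show (2-2*x)/4 = (1-x)/2 by ring, h]
    norm_num
  have hQ4 : ∀ x : ℝ, HasDerivAt (fun x : ℝ => 1/2 * x ^ 1) (1/2) x := by
    intro x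
    have h := (hasDerivAt_pow 1 x).const_mul (1/2 : ℝ)
    refine h.congr_deriv ?_
    push_cast
    norm_num
    try ring
  have hstep4 := fab_step (fun x : ℝ => f ((1+x)/4) - f ((1-x)/4)) (fun x : ℝ => 2/4 * (f ((2+2*x)/4) + f ((2-2*x)/4)))
    (fun x : ℝ => 1/2) (fun x : ℝ => 1/2 * x ^ 1)
    hg4 hgd4 hgc4 heq4 hQ4 (by fun_prop)
  have hP4 : ∀ x ∈ Set.Icc (0:ℝ) 1, f ((1+x)/4) - f ((1-x)/4) = 1/2 * x ^ 1 := by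
    intro x hx
    have h := hstep4 x hx
    rw [show ((1:ℝ)+0)/4 = 1/4 by norm_num, show ((1:ℝ)-0)/4 = 1/4 by norm_num] at h
    linarith [h]
  have hg8 : ContinuousOn (fun x : ℝ => f ((1+x)/8) + f ((1-x)/8)) (Set.Icc 0 1) := ContinuousOn.add
    (by
      apply hcont.comp (by fun_prop)
      intro t ht
      exact Set.mem_Ici.mpr (div_nonneg (by linarith [ht.1, ht.2]) (by norm_num)))
    (by
      apply hcont.comp (by fun_prop)
      intro t ht
      exact Set.mem_Ici.mpr (div_nonneg (by linarith [ht.1, ht.2]) (by norm_num)))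
  have hgc8 : ContinuousOn (fun x : ℝ => 2/8 * (f ((2+2*x)/8) - f ((2-2*x)/8))) (Set.Icc 0 1) := continuousOn_const.mul (ContinuousOn.sub
    (by
      apply hcont.comp (by fun_prop)
      intro t ht
      exact Set.mem_Ici.mpr (div_nonneg (by linarith [ht.1, ht.2]) (by norm_num)))
    (by
      apply hcont.comp (by fun_prop)
      intro t ht
      exact Set.mem_Ici.mpr (div_nonneg (by linarith [ht.1, ht.2]) (by norm_num))))
  have hgd8 : ∀ x ∈ Set.Ioo (0:ℝ) 1, HasDerivAt (fun x : ℝ => f ((1+x)/8) + f ((1-x)/8)) (2/8 * (f ((2+2*x)/8) - f ((2-2*x)/8))) x := by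
    intro x hx
    have h := (hdp 8 (by norm_num) x (by linarith [hx.1])).add (hdm 8 (by norm_num) x hx.2)
    refine h.congr_deriv ?_
    ring
  have heq8 : ∀ x ∈ Set.Icc (0:ℝ) 1, 2/8 * (f ((2+2*x)/8) - f ((2-2*x)/8)) = (1/8 * x ^ 1) := by
    intro x hx
    rw [show (2+2*x)/8 = (1+x)/4 by ring, show (2-2*x)/8 = (1-x)/4 by ring,
      hP4 x hx]
    ring
  have hQ8 : ∀ x : ℝ, HasDerivAt (fun x : ℝ => 1/16 * x ^ 2) (1/8 * x ^ 1) x := by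
    intro x
    have h := (hasDerivAt_pow 2 x).const_mul (1/16 : ℝ)
    refine h.congr_deriv ?_
    push_cast
    norm_num
    try ring
  have hstep8 := fab_step (fun x : ℝ => f ((1+x)/8) + f ((1-x)/8)) (fun x : ℝ => 2/8 * (f ((2+2*x)/8) - f ((2-2*x)/8)))
    (fun x : ℝ => 1/8 * x ^ 1) (fun x : ℝ => 1/16 * x ^ 2)
    hg8 hgd8 hgc8 heq8 hQ8 (by fun_prop)
  have hP8 : ∀ x ∈ Set.Icc (0:ℝ) 1, f ((1+x)/8) + f ((1-x)/8) = 2 * f (1/8) + 1/16 * x ^ 2 := by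
    intro x hx
    have h := hstep8 x hx
    rw [show ((1:ℝ)+0)/8 = 1/8 by norm_num, show ((1:ℝ)-0)/8 = 1/8 by norm_num] at h
    linarith [h]
  have hg16 : ContinuousOn (fun x : ℝ => f ((1+x)/16) - f ((1-x)/16)) (Set.Icc 0 1) := ContinuousOn.sub
    (by
      apply hcont.comp (by fun_prop)
      intro t ht
      exact Set.mem_Ici.mpr (div_nonneg (by linarith [ht.1, ht.2]) (by norm_num)))
    (by
      apply hcont.comp (by fun_prop)
      intro t ht
      exact Set.mem_Ici.mpr (div_nonneg (by linarith [ht.1, ht.2]) (by norm_num)))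
  have hgc16 : ContinuousOn (fun x : ℝ => 2/16 * (f ((2+2*x)/16) + f ((2-2*x)/16))) (Set.Icc 0 1) := continuousOn_const.mul (ContinuousOn.add
    (by
      apply hcont.comp (by fun_prop)
      intro t ht
      exact Set.mem_Ici.mpr (div_nonneg (by linarith [ht.1, ht.2]) (by norm_num)))
    (by
      apply hcont.comp (by fun_prop)
      intro t ht
      exact Set.mem_Ici.mpr (div_nonneg (by linarith [ht.1, ht.2]) (by norm_num))))
  have hgd16 : ∀ x ∈ Set.Ioo (0:ℝ) 1, HasDerivAt (fun x : ℝ => f ((1+x)/16) - f ((1-x)/16)) (2/16 * (f ((2+2*x)/16) + f ((2-2*x)/16))) x := by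
    intro x hx
    have h := (hdp 16 (by norm_num) x (by linarith [hx.1])).sub (hdm 16 (by norm_num) x hx.2)
    refine h.congr_deriv ?_
    ring
  have heq16 : ∀ x ∈ Set.Icc (0:ℝ) 1, 2/16 * (f ((2+2*x)/16) + f ((2-2*x)/16)) = (1/4 * f (1/8) + 1/128 * x ^ 2) := by
    intro x hx
    rw [show (2+2*x)/16 = (1+x)/8 by ring, show (2-2*x)/16 = (1-x)/8 by ring,
      hP8 x hx]
    ring
  have hQ16 : ∀ x : ℝ, HasDerivAt (fun x : ℝ => 1/4 * f (1/8) * x ^ 1 + 1/384 * x ^ 3) (1/4 * f (1/8) + 1/128 * x ^ 2) x := by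
    intro x
    have h := (((hasDerivAt_pow 1 x).const_mul (1/4 * f (1/8) : ℝ))).add ((hasDerivAt_pow 3 x).const_mul (1/384 : ℝ))
    refine h.congr_deriv ?_
    push_cast
    norm_num
    try ring
  have hstep16 := fab_step (fun x : ℝ => f ((1+x)/16) - f ((1-x)/16)) (fun x : ℝ => 2/16 * (f ((2+2*x)/16) + f ((2-2*x)/16)))
    (fun x : ℝ => 1/4 * f (1/8) + 1/128 * x ^ 2) (fun x : ℝ => 1/4 * f (1/8) * x ^ 1 + 1/384 * x ^ 3)
    hg16 hgd16 hgc16 heq16 hQ16 (by fun_prop)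
  have hP16 : ∀ x ∈ Set.Icc (0:ℝ) 1, f ((1+x)/16) - f ((1-x)/16) = 1/4 * f (1/8) * x ^ 1 + 1/384 * x ^ 3 := by
    intro x hx
    have h := hstep16 x hx
    rw [show ((1:ℝ)+0)/16 = 1/16 by norm_num, show ((1:ℝ)-0)/16 = 1/16 by norm_num] at h
    linarith [h]
  have hA : f (1/8) = 1/288 := by
    have h := hP16 1 (by norm_num)
    rw [show ((1:ℝ)+1)/16 = 1/8 by norm_num, show ((1:ℝ)-1)/16 = 0 by norm_num, hf0] at h
    linarith [h]
  have hP16c : ∀ x ∈ Set.Icc (0:ℝ) 1, f ((1+x)/16) - f ((1-x)/16) = 1/1152 * x ^ 1 + 1/384 * x ^ 3 := by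
    intro x hx
    have h := hP16 x hx
    rw [hA] at h
    linarith [h]
  have hg32 : ContinuousOn (fun x : ℝ => f ((1+x)/32) + f ((1-x)/32)) (Set.Icc 0 1) := ContinuousOn.add
    (by
      apply hcont.comp (by fun_prop)
      intro t ht
      exact Set.mem_Ici.mpr (div_nonneg (by linarith [ht.1, ht.2]) (by norm_num)))
    (by
      apply hcont.comp (by fun_prop)
      intro t ht
      exact Set.mem_Ici.mpr (div_nonneg (by linarith [ht.1, ht.2]) (by norm_num)))
  have hgc32 : ContinuousOn (fun x : ℝ => 2/32 * (f ((2+2*x)/32) - f ((2-2*x)/32))) (Set.Icc 0 1) := continuousOn_const.mul (ContinuousOn.sub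
    (by
      apply hcont.comp (by fun_prop)
      intro t ht
      exact Set.mem_Ici.mpr (div_nonneg (by linarith [ht.1, ht.2]) (by norm_num)))
    (by
      apply hcont.comp (by fun_prop)
      intro t ht
      exact Set.mem_Ici.mpr (div_nonneg (by linarith [ht.1, ht.2]) (by norm_num))))
  have hgd32 : ∀ x ∈ Set.Ioo (0:ℝ) 1, HasDerivAt (fun x : ℝ => f ((1+x)/32) + f ((1-x)/32)) (2/32 * (f ((2+2*x)/32) - f ((2-2*x)/32))) x := by
    intro x hx
    have h := (hdp 32 (by norm_num) x (by linarith [hx.1])).add (hdm 32 (by norm_num) x hx.2)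
    refine h.congr_deriv ?_
    ring
  have heq32 : ∀ x ∈ Set.Icc (0:ℝ) 1, 2/32 * (f ((2+2*x)/32) - f ((2-2*x)/32)) = (1/18432 * x ^ 1 + 1/6144 * x ^ 3) := by
    intro x hx
    rw [show (2+2*x)/32 = (1+x)/16 by ring, show (2-2*x)/32 = (1-x)/16 by ring,
      hP16c x hx]
    ring
  have hQ32 : ∀ x : ℝ, HasDerivAt (fun x : ℝ => 1/36864 * x ^ 2 + 1/24576 * x ^ 4) (1/18432 * x ^ 1 + 1/6144 * x ^ 3) x := by
    intro x
    have h := (((hasDerivAt_pow 2 x).const_mul (1/36864 : ℝ))).add ((hasDerivAt_pow 4 x).const_mul (1/24576 : ℝ))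
    refine h.congr_deriv ?_
    push_cast
    norm_num
    try ring
  have hstep32 := fab_step (fun x : ℝ => f ((1+x)/32) + f ((1-x)/32)) (fun x : ℝ => 2/32 * (f ((2+2*x)/32) - f ((2-2*x)/32)))
    (fun x : ℝ => 1/18432 * x ^ 1 + 1/6144 * x ^ 3) (fun x : ℝ => 1/36864 * x ^ 2 + 1/24576 * x ^ 4)
    hg32 hgd32 hgc32 heq32 hQ32 (by fun_prop)
  have hP32 : ∀ x ∈ Set.Icc (0:ℝ) 1, f ((1+x)/32) + f ((1-x)/32) = 2 * f (1/32) + 1/36864 * x ^ 2 + 1/24576 * x ^ 4 := by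
    intro x hx
    have h := hstep32 x hx
    rw [show ((1:ℝ)+0)/32 = 1/32 by norm_num, show ((1:ℝ)-0)/32 = 1/32 by norm_num] at h
    linarith [h]
  have hg64 : ContinuousOn (fun x : ℝ => f ((1+x)/64) - f ((1-x)/64)) (Set.Icc 0 1) := ContinuousOn.sub
    (by
      apply hcont.comp (by fun_prop)
      intro t ht
      exact Set.mem_Ici.mpr (div_nonneg (by linarith [ht.1, ht.2]) (by norm_num)))
    (by
      apply hcont.comp (by fun_prop)
      intro t ht
      exact Set.mem_Ici.mpr (div_nonneg (by linarith [ht.1, ht.2]) (by norm_num)))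
  have hgc64 : ContinuousOn (fun x : ℝ => 2/64 * (f ((2+2*x)/64) + f ((2-2*x)/64))) (Set.Icc 0 1) := continuousOn_const.mul (ContinuousOn.add
    (by
      apply hcont.comp (by fun_prop)
      intro t ht
      exact Set.mem_Ici.mpr (div_nonneg (by linarith [ht.1, ht.2]) (by norm_num)))
    (by
      apply hcont.comp (by fun_prop)
      intro t ht
      exact Set.mem_Ici.mpr (div_nonneg (by linarith [ht.1, ht.2]) (by norm_num))))
  have hgd64 : ∀ x ∈ Set.Ioo (0:ℝ) 1, HasDerivAt (fun x : ℝ => f ((1+x)/64) - f ((1-x)/64)) (2/64 * (f ((2+2*x)/64) + f ((2-2*x)/64))) x := by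
    intro x hx
    have h := (hdp 64 (by norm_num) x (by linarith [hx.1])).sub (hdm 64 (by norm_num) x hx.2)
    refine h.congr_deriv ?_
    ring
  have heq64 : ∀ x ∈ Set.Icc (0:ℝ) 1, 2/64 * (f ((2+2*x)/64) + f ((2-2*x)/64)) = (1/16 * f (1/32) + 1/1179648 * x ^ 2 + 1/786432 * x ^ 4) := by
    intro x hx
    rw [show (2+2*x)/64 = (1+x)/32 by ring, show (2-2*x)/64 = (1-x)/32 by ring,
      hP32 x hx]
    ring
  have hQ64 : ∀ x : ℝ, HasDerivAt (fun x : ℝ => 1/16 * f (1/32) * x ^ 1 + 1/3538944 * x ^ 3 + 1/3932160 * x ^ 5) (1/16 * f (1/32) + 1/1179648 * x ^ 2 + 1/786432 * x ^ 4) x := by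
    intro x
    have h := ((((hasDerivAt_pow 1 x).const_mul (1/16 * f (1/32) : ℝ))).add ((hasDerivAt_pow 3 x).const_mul (1/3538944 : ℝ))).add ((hasDerivAt_pow 5 x).const_mul (1/3932160 : ℝ))
    refine h.congr_deriv ?_
    push_cast
    norm_num
    try ring
  have hstep64 := fab_step (fun x : ℝ => f ((1+x)/64) - f ((1-x)/64)) (fun x : ℝ => 2/64 * (f ((2+2*x)/64) + f ((2-2*x)/64)))
    (fun x : ℝ => 1/16 * f (1/32) + 1/1179648 * x ^ 2 + 1/786432 * x ^ 4) (fun x : ℝ => 1/16 * f (1/32) * x ^ 1 + 1/3538944 * x ^ 3 + 1/3932160 * x ^ 5)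
    hg64 hgd64 hgc64 heq64 hQ64 (by fun_prop)
  have hP64 : ∀ x ∈ Set.Icc (0:ℝ) 1, f ((1+x)/64) - f ((1-x)/64) = 1/16 * f (1/32) * x ^ 1 + 1/3538944 * x ^ 3 + 1/3932160 * x ^ 5 := by
    intro x hx
    have h := hstep64 x hx
    rw [show ((1:ℝ)+0)/64 = 1/64 by norm_num, show ((1:ℝ)-0)/64 = 1/64 by norm_num] at h
    linarith [h]
  have hB : f (1/32) = 19/33177600 := by
    have h := hP64 1 (by norm_num)
    rw [show ((1:ℝ)+1)/64 = 1/32 by norm_num, show ((1:ℝ)-1)/64 = 0 by norm_num, hf0] at h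
    linarith [h]
  have hP64c : ∀ x ∈ Set.Icc (0:ℝ) 1, f ((1+x)/64) - f ((1-x)/64) = 19/530841600 * x ^ 1 + 1/3538944 * x ^ 3 + 1/3932160 * x ^ 5 := by
    intro x hx
    have h := hP64 x hx
    rw [hB] at h
    linarith [h]
  have hg128 : ContinuousOn (fun x : ℝ => f ((1+x)/128) + f ((1-x)/128)) (Set.Icc 0 1) := ContinuousOn.add
    (by
      apply hcont.comp (by fun_prop)
      intro t ht
      exact Set.mem_Ici.mpr (div_nonneg (by linarith [ht.1, ht.2]) (by norm_num)))
    (by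
      apply hcont.comp (by fun_prop)
      intro t ht
      exact Set.mem_Ici.mpr (div_nonneg (by linarith [ht.1, ht.2]) (by norm_num)))
  have hgc128 : ContinuousOn (fun x : ℝ => 2/128 * (f ((2+2*x)/128) - f ((2-2*x)/128))) (Set.Icc 0 1) := continuousOn_const.mul (ContinuousOn.sub
    (by
      apply hcont.comp (by fun_prop)
      intro t ht
      exact Set.mem_Ici.mpr (div_nonneg (by linarith [ht.1, ht.2]) (by norm_num)))
    (by
      apply hcont.comp (by fun_prop)
      intro t ht
      exact Set.mem_Ici.mpr (div_nonneg (by linarith [ht.1, ht.2]) (by norm_num))))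
  have hgd128 : ∀ x ∈ Set.Ioo (0:ℝ) 1, HasDerivAt (fun x : ℝ => f ((1+x)/128) + f ((1-x)/128)) (2/128 * (f ((2+2*x)/128) - f ((2-2*x)/128))) x := by
    intro x hx
    have h := (hdp 128 (by norm_num) x (by linarith [hx.1])).add (hdm 128 (by norm_num) x hx.2)
    refine h.congr_deriv ?_
    ring
  have heq128 : ∀ x ∈ Set.Icc (0:ℝ) 1, 2/128 * (f ((2+2*x)/128) - f ((2-2*x)/128)) = (19/33973862400 * x ^ 1 + 1/226492416 * x ^ 3 + 1/251658240 * x ^ 5) := by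
    intro x hx
    rw [show (2+2*x)/128 = (1+x)/64 by ring, show (2-2*x)/128 = (1-x)/64 by ring,
      hP64c x hx]
    ring
  have hQ128 : ∀ x : ℝ, HasDerivAt (fun x : ℝ => 19/67947724800 * x ^ 2 + 1/905969664 * x ^ 4 + 1/1509949440 * x ^ 6) (19/33973862400 * x ^ 1 + 1/226492416 * x ^ 3 + 1/251658240 * x ^ 5) x := by
    intro x
    have h := ((((hasDerivAt_pow 2 x).const_mul (19/67947724800 : ℝ))).add ((hasDerivAt_pow 4 x).const_mul (1/905969664 : ℝ))).add ((hasDerivAt_pow 6 x).const_mul (1/1509949440 : ℝ))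
    refine h.congr_deriv ?_
    push_cast
    norm_num
    try ring
  have hstep128 := fab_step (fun x : ℝ => f ((1+x)/128) + f ((1-x)/128)) (fun x : ℝ => 2/128 * (f ((2+2*x)/128) - f ((2-2*x)/128)))
    (fun x : ℝ => 19/33973862400 * x ^ 1 + 1/226492416 * x ^ 3 + 1/251658240 * x ^ 5) (fun x : ℝ => 19/67947724800 * x ^ 2 + 1/905969664 * x ^ 4 + 1/1509949440 * x ^ 6)
    hg128 hgd128 hgc128 heq128 hQ128 (by fun_prop)
  have hP128 : ∀ x ∈ Set.Icc (0:ℝ) 1, f ((1+x)/128) + f ((1-x)/128) = 2 * f (1/128) + 19/67947724800 * x ^ 2 + 1/905969664 * x ^ 4 + 1/1509949440 * x ^ 6 := by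
    intro x hx
    have h := hstep128 x hx
    rw [show ((1:ℝ)+0)/128 = 1/128 by norm_num, show ((1:ℝ)-0)/128 = 1/128 by norm_num] at h
    linarith [h]
  have hg256 : ContinuousOn (fun x : ℝ => f ((1+x)/256) - f ((1-x)/256)) (Set.Icc 0 1) := ContinuousOn.sub
    (by
      apply hcont.comp (by fun_prop)
      intro t ht
      exact Set.mem_Ici.mpr (div_nonneg (by linarith [ht.1, ht.2]) (by norm_num)))
    (by
      apply hcont.comp (by fun_prop)
      intro t ht
      exact Set.mem_Ici.mpr (div_nonneg (by linarith [ht.1, ht.2]) (by norm_num)))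
  have hgc256 : ContinuousOn (fun x : ℝ => 2/256 * (f ((2+2*x)/256) + f ((2-2*x)/256))) (Set.Icc 0 1) := continuousOn_const.mul (ContinuousOn.add
    (by
      apply hcont.comp (by fun_prop)
      intro t ht
      exact Set.mem_Ici.mpr (div_nonneg (by linarith [ht.1, ht.2]) (by norm_num)))
    (by
      apply hcont.comp (by fun_prop)
      intro t ht
      exact Set.mem_Ici.mpr (div_nonneg (by linarith [ht.1, ht.2]) (by norm_num))))
  have hgd256 : ∀ x ∈ Set.Ioo (0:ℝ) 1, HasDerivAt (fun x : ℝ => f ((1+x)/256) - f ((1-x)/256)) (2/256 * (f ((2+2*x)/256) + f ((2-2*x)/256))) x := by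
    intro x hx
    have h := (hdp 256 (by norm_num) x (by linarith [hx.1])).sub (hdm 256 (by norm_num) x hx.2)
    refine h.congr_deriv ?_
    ring
  have heq256 : ∀ x ∈ Set.Icc (0:ℝ) 1, 2/256 * (f ((2+2*x)/256) + f ((2-2*x)/256)) = (1/64 * f (1/128) + 19/8697308774400 * x ^ 2 + 1/115964116992 * x ^ 4 + 1/193273528320 * x ^ 6) := by
    intro x hx
    rw [show (2+2*x)/256 = (1+x)/128 by ring, show (2-2*x)/256 = (1-x)/128 by ring,
      hP128 x hx]
    ring
  have hQ256 : ∀ x : ℝ, HasDerivAt (fun x : ℝ => 1/64 * f (1/128) * x ^ 1 + 19/26091926323200 * x ^ 3 + 1/579820584960 * x ^ 5 + 1/1352914698240 * x ^ 7) (1/64 * f (1/128) + 19/8697308774400 * x ^ 2 + 1/115964116992 * x ^ 4 + 1/193273528320 * x ^ 6) x := by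
    intro x
    have h := (((((hasDerivAt_pow 1 x).const_mul (1/64 * f (1/128) : ℝ))).add ((hasDerivAt_pow 3 x).const_mul (19/26091926323200 : ℝ))).add ((hasDerivAt_pow 5 x).const_mul (1/579820584960 : ℝ))).add ((hasDerivAt_pow 7 x).const_mul (1/1352914698240 : ℝ))
    refine h.congr_deriv ?_
    push_cast
    norm_num
    try ring
  have hstep256 := fab_step (fun x : ℝ => f ((1+x)/256) - f ((1-x)/256)) (fun x : ℝ => 2/256 * (f ((2+2*x)/256) + f ((2-2*x)/256)))
    (fun x : ℝ => 1/64 * f (1/128) + 19/8697308774400 * x ^ 2 + 1/115964116992 * x ^ 4 + 1/193273528320 * x ^ 6) (fun x : ℝ => 1/64 * f (1/128) * x ^ 1 + 19/26091926323200 * x ^ 3 + 1/579820584960 * x ^ 5 + 1/1352914698240 * x ^ 7)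
    hg256 hgd256 hgc256 heq256 hQ256 (by fun_prop)
  have hP256 : ∀ x ∈ Set.Icc (0:ℝ) 1, f ((1+x)/256) - f ((1-x)/256) = 1/64 * f (1/128) * x ^ 1 + 19/26091926323200 * x ^ 3 + 1/579820584960 * x ^ 5 + 1/1352914698240 * x ^ 7 := by
    intro x hx
    have h := hstep256 x hx
    rw [show ((1:ℝ)+0)/256 = 1/256 by norm_num, show ((1:ℝ)-0)/256 = 1/256 by norm_num] at h
    linarith [h]
  have hC : f (1/128) = 583/179789679820800 := by
    have h := hP256 1 (by norm_num)
    rw [show ((1:ℝ)+1)/256 = 1/128 by norm_num, show ((1:ℝ)-1)/256 = 0 by norm_num, hf0] at h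
    linarith [h]
  have hP256c : ∀ x ∈ Set.Icc (0:ℝ) 1, f ((1+x)/256) - f ((1-x)/256) = 583/11506539508531200 * x ^ 1 + 19/26091926323200 * x ^ 3 + 1/579820584960 * x ^ 5 + 1/1352914698240 * x ^ 7 := by
    intro x hx
    have h := hP256 x hx
    rw [hC] at h
    linarith [h]
  have hg512 : ContinuousOn (fun x : ℝ => f ((1+x)/512) + f ((1-x)/512)) (Set.Icc 0 1) := ContinuousOn.add
    (by
      apply hcont.comp (by fun_prop)
      intro t ht
      exact Set.mem_Ici.mpr (div_nonneg (by linarith [ht.1, ht.2]) (by norm_num)))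
    (by
      apply hcont.comp (by fun_prop)
      intro t ht
      exact Set.mem_Ici.mpr (div_nonneg (by linarith [ht.1, ht.2]) (by norm_num)))
  have hgc512 : ContinuousOn (fun x : ℝ => 2/512 * (f ((2+2*x)/512) - f ((2-2*x)/512))) (Set.Icc 0 1) := continuousOn_const.mul (ContinuousOn.sub
    (by
      apply hcont.comp (by fun_prop)
      intro t ht
      exact Set.mem_Ici.mpr (div_nonneg (by linarith [ht.1, ht.2]) (by norm_num)))
    (by
      apply hcont.comp (by fun_prop)
      intro t ht
      exact Set.mem_Ici.mpr (div_nonneg (by linarith [ht.1, ht.2]) (by norm_num))))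
  have hgd512 : ∀ x ∈ Set.Ioo (0:ℝ) 1, HasDerivAt (fun x : ℝ => f ((1+x)/512) + f ((1-x)/512)) (2/512 * (f ((2+2*x)/512) - f ((2-2*x)/512))) x := by
    intro x hx
    have h := (hdp 512 (by norm_num) x (by linarith [hx.1])).add (hdm 512 (by norm_num) x hx.2)
    refine h.congr_deriv ?_
    ring
  have heq512 : ∀ x ∈ Set.Icc (0:ℝ) 1, 2/512 * (f ((2+2*x)/512) - f ((2-2*x)/512)) = (583/2945674114183987200 * x ^ 1 + 19/6679533138739200 * x ^ 3 + 1/148434069749760 * x ^ 5 + 1/346346162749440 * x ^ 7) := by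
    intro x hx
    rw [show (2+2*x)/512 = (1+x)/256 by ring, show (2-2*x)/512 = (1-x)/256 by ring,
      hP256c x hx]
    ring
  have hQ512 : ∀ x : ℝ, HasDerivAt (fun x : ℝ => 583/5891348228367974400 * x ^ 2 + 19/26718132554956800 * x ^ 4 + 1/890604418498560 * x ^ 6 + 1/2770769301995520 * x ^ 8) (583/2945674114183987200 * x ^ 1 + 19/6679533138739200 * x ^ 3 + 1/148434069749760 * x ^ 5 + 1/346346162749440 * x ^ 7) x := by
    intro x
    have h := (((((hasDerivAt_pow 2 x).const_mul (583/5891348228367974400 : ℝ))).add ((hasDerivAt_pow 4 x).const_mul (19/26718132554956800 : ℝ))).add ((hasDerivAt_pow 6 x).const_mul (1/890604418498560 : ℝ))).add ((hasDerivAt_pow 8 x).const_mul (1/2770769301995520 : ℝ))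
    refine h.congr_deriv ?_
    push_cast
    norm_num
    try ring
  have hstep512 := fab_step (fun x : ℝ => f ((1+x)/512) + f ((1-x)/512)) (fun x : ℝ => 2/512 * (f ((2+2*x)/512) - f ((2-2*x)/512)))
    (fun x : ℝ => 583/2945674114183987200 * x ^ 1 + 19/6679533138739200 * x ^ 3 + 1/148434069749760 * x ^ 5 + 1/346346162749440 * x ^ 7) (fun x : ℝ => 583/5891348228367974400 * x ^ 2 + 19/26718132554956800 * x ^ 4 + 1/890604418498560 * x ^ 6 + 1/2770769301995520 * x ^ 8)
    hg512 hgd512 hgc512 heq512 hQ512 (by fun_prop)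
  have hP512 : ∀ x ∈ Set.Icc (0:ℝ) 1, f ((1+x)/512) + f ((1-x)/512) = 2 * f (1/512) + 583/5891348228367974400 * x ^ 2 + 19/26718132554956800 * x ^ 4 + 1/890604418498560 * x ^ 6 + 1/2770769301995520 * x ^ 8 := by
    intro x hx
    have h := hstep512 x hx
    rw [show ((1:ℝ)+0)/512 = 1/512 by norm_num, show ((1:ℝ)-0)/512 = 1/512 by norm_num] at h
    linarith [h]
  have hg1024 : ContinuousOn (fun x : ℝ => f ((1+x)/1024) - f ((1-x)/1024)) (Set.Icc 0 1) := ContinuousOn.sub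
    (by
      apply hcont.comp (by fun_prop)
      intro t ht
      exact Set.mem_Ici.mpr (div_nonneg (by linarith [ht.1, ht.2]) (by norm_num)))
    (by
      apply hcont.comp (by fun_prop)
      intro t ht
      exact Set.mem_Ici.mpr (div_nonneg (by linarith [ht.1, ht.2]) (by norm_num)))
  have hgc1024 : ContinuousOn (fun x : ℝ => 2/1024 * (f ((2+2*x)/1024) + f ((2-2*x)/1024))) (Set.Icc 0 1) := continuousOn_const.mul (ContinuousOn.add
    (by
      apply hcont.comp (by fun_prop)
      intro t ht
      exact Set.mem_Ici.mpr (div_nonneg (by linarith [ht.1, ht.2]) (by norm_num)))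
    (by
      apply hcont.comp (by fun_prop)
      intro t ht
      exact Set.mem_Ici.mpr (div_nonneg (by linarith [ht.1, ht.2]) (by norm_num))))
  have hgd1024 : ∀ x ∈ Set.Ioo (0:ℝ) 1, HasDerivAt (fun x : ℝ => f ((1+x)/1024) - f ((1-x)/1024)) (2/1024 * (f ((2+2*x)/1024) + f ((2-2*x)/1024))) x := by
    intro x hx
    have h := (hdp 1024 (by norm_num) x (by linarith [hx.1])).sub (hdm 1024 (by norm_num) x hx.2)
    refine h.congr_deriv ?_
    ring
  have heq1024 : ∀ x ∈ Set.Icc (0:ℝ) 1, 2/1024 * (f ((2+2*x)/1024) + f ((2-2*x)/1024)) = (1/256 * f (1/512) + 583/3016370292924402892800 * x ^ 2 + 19/13679683868137881600 * x ^ 4 + 1/455989462271262720 * x ^ 6 + 1/1418633882621706240 * x ^ 8) := by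
    intro x hx
    rw [show (2+2*x)/1024 = (1+x)/512 by ring, show (2-2*x)/1024 = (1-x)/512 by ring,
      hP512 x hx]
    ring
  have hQ1024 : ∀ x : ℝ, HasDerivAt (fun x : ℝ => 1/256 * f (1/512) * x ^ 1 + 583/9049110878773208678400 * x ^ 3 + 19/68398419340689408000 * x ^ 5 + 1/3191926235898839040 * x ^ 7 + 1/12767704943595356160 * x ^ 9) (1/256 * f (1/512) + 583/3016370292924402892800 * x ^ 2 + 19/13679683868137881600 * x ^ 4 + 1/455989462271262720 * x ^ 6 + 1/1418633882621706240 * x ^ 8) x := by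
    intro x
    have h := ((((((hasDerivAt_pow 1 x).const_mul (1/256 * f (1/512) : ℝ))).add ((hasDerivAt_pow 3 x).const_mul (583/9049110878773208678400 : ℝ))).add ((hasDerivAt_pow 5 x).const_mul (19/68398419340689408000 : ℝ))).add ((hasDerivAt_pow 7 x).const_mul (1/3191926235898839040 : ℝ))).add ((hasDerivAt_pow 9 x).const_mul (1/12767704943595356160 : ℝ))
    refine h.congr_deriv ?_
    push_cast
    norm_num
    try ring
  have hstep1024 := fab_step (fun x : ℝ => f ((1+x)/1024) - f ((1-x)/1024)) (fun x : ℝ => 2/1024 * (f ((2+2*x)/1024) + f ((2-2*x)/1024)))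
    (fun x : ℝ => 1/256 * f (1/512) + 583/3016370292924402892800 * x ^ 2 + 19/13679683868137881600 * x ^ 4 + 1/455989462271262720 * x ^ 6 + 1/1418633882621706240 * x ^ 8) (fun x : ℝ => 1/256 * f (1/512) * x ^ 1 + 583/9049110878773208678400 * x ^ 3 + 19/68398419340689408000 * x ^ 5 + 1/3191926235898839040 * x ^ 7 + 1/12767704943595356160 * x ^ 9)
    hg1024 hgd1024 hgc1024 heq1024 hQ1024 (by fun_prop)
  have hP1024 : ∀ x ∈ Set.Icc (0:ℝ) 1, f ((1+x)/1024) - f ((1-x)/1024) = 1/256 * f (1/512) * x ^ 1 + 583/9049110878773208678400 * x ^ 3 + 19/68398419340689408000 * x ^ 5 + 1/3191926235898839040 * x ^ 7 + 1/12767704943595356160 * x ^ 9 := by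
    intro x hx
    have h := hstep1024 x hx
    rw [show ((1:ℝ)+0)/1024 = 1/1024 by norm_num, show ((1:ℝ)-0)/1024 = 1/1024 by norm_num] at h
    linarith [h]
  have hD : f (1/512) = 132809/180275255788060016640000 := by
    have h := hP1024 1 (by norm_num)
    rw [show ((1:ℝ)+1)/1024 = 1/512 by norm_num, show ((1:ℝ)-1)/1024 = 0 by norm_num, hf0] at h
    linarith [h]
  have hP1024c : ∀ x ∈ Set.Icc (0:ℝ) 1, f ((1+x)/1024) - f ((1-x)/1024) = 132809/46150465481743364259840000 * x ^ 1 + 583/9049110878773208678400 * x ^ 3 + 19/68398419340689408000 * x ^ 5 + 1/3191926235898839040 * x ^ 7 + 1/12767704943595356160 * x ^ 9 := by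
    intro x hx
    have h := hP1024 x hx
    rw [hD] at h
    linarith [h]
  intro x hx0 hx1
  have h := hP512 x (Set.mem_Icc.mpr ⟨hx0, hx1⟩)
  rw [hD] at h
  rw [h]
  ring
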